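/- Let 0 ≤ α < β be real numbers, let S be a C¹ survival function on [α,β] with hazard rate λ := −S'/S, let φ : ℝ → ℝ be continuously differentiable on [α,β], and set L(y) := ∫_y^β S(u) φ'(u) du. Then for all α ≤ w ≤ y ≤ β: (i) ∫_w^y L(u) λ(u)/S(u) du = L(y)/S(y) − L(w)/S(w) + φ(y) − φ(w); and consequently (ii) |∫_w^y L(u) λ(u)/S(u) du| ≤ 2 sup_{u∈[w,y]} |L(u)/S(u)| + ∫_w^y |φ'(u)| du, and if φ is nondecreasing on [α,β] then 0 ≤ ∫_w^y L(u) λ(u)/S(u) du ≤ 2 sup_{u∈[w,y]} |L(u)/S(u)| + (φ(y) − φ(w)). -/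

import Mathlib

open Set intervalIntegral MeasureTheory

/-- If `f` is monotone on `[a,b]` (with `a < b`) and differentiable at `x ∈ [a,b]`, then
its derivative at `x` is nonnegative. -/
lemma deriv_nonneg_of_monotoneOn_aux {f : ℝ → ℝ} {a b x c : ℝ} (hab : a < b)
    (hx : x ∈ Set.Icc a b) (hm : MonotoneOn f (Set.Icc a b)) (hd : HasDerivAt f c x) :
    0 ≤ c := by
  rcases lt_or_eq_of_le hx.2 with h | h
  · -- x < b : approach from the right
    have hne : (nhdsWithin x (Set.Ioc x b)).NeBot := by
      apply mem_closure_iff_nhdsWithin_neBot.mp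
      rw [closure_Ioc h.ne]
      exact ⟨le_rfl, h.le⟩
    have hdw : HasDerivWithinAt f c (Set.Ioc x b) x := hd.hasDerivWithinAt
    rw [hasDerivWithinAt_iff_tendsto_slope] at hdw
    have hsub : Set.Ioc x b ⊆ Set.Ioc x b \ {x} := fun z hz =>
      ⟨hz, by simp [ne_of_gt hz.1]⟩
    have ht : Filter.Tendsto (slope f x) (nhdsWithin x (Set.Ioc x b)) (nhds c) :=
      hdw.mono_left (nhdsWithin_mono _ hsub)
    refine ge_of_tendsto ht ?_
    filter_upwards [self_mem_nhdsWithin] with z hz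
    have hzIcc : z ∈ Set.Icc a b := ⟨le_trans hx.1 hz.1.le, hz.2⟩
    have hfz : f x ≤ f z := hm hx hzIcc hz.1.le
    rw [slope_def_field]
    exact div_nonneg (by linarith) (by linarith [hz.1])
  · -- x = b : approach from the left
    subst h
    have hne : (nhdsWithin x (Set.Ico a x)).NeBot := by
      apply mem_closure_iff_nhdsWithin_neBot.mp
      rw [closure_Ico hab.ne]
      exact ⟨hab.le, le_rfl⟩
    have hdw : HasDerivWithinAt f c (Set.Ico a x) x := hd.hasDerivWithinAt
    rw [hasDerivWithinAt_iff_tendsto_slope] at hdw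
    have hsub : Set.Ico a x ⊆ Set.Ico a x \ {x} := fun z hz =>
      ⟨hz, by simp [ne_of_lt hz.2]⟩
    have ht : Filter.Tendsto (slope f x) (nhdsWithin x (Set.Ico a x)) (nhds c) :=
      hdw.mono_left (nhdsWithin_mono _ hsub)
    refine ge_of_tendsto ht ?_
    filter_upwards [self_mem_nhdsWithin] with z hz
    have hzIcc : z ∈ Set.Icc a x := ⟨hz.1, hz.2.le⟩
    have hfz : f z ≤ f x := hm hzIcc hx hz.2.le
    rw [slope_def_field, div_nonneg_iff]
    right
    exact ⟨by linarith, by linarith [hz.2]⟩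

/-- Key identity and bounds for `∫_w^y L(u) λ(u)/S(u) du` where `L y = ∫_y^β S φ'` and
`λ = -S'/S`: (i) it equals `L y/S y - L w/S w + φ y - φ w`; (ii) it is bounded by
`2 sup |L/S| + ∫ |φ'|`, and if `φ` is nondecreasing, it lies in
`[0, 2 sup |L/S| + (φ y - φ w)]`. -/
theorem kernel_hazard_integral_identity_and_bound
    (α β : ℝ) (hα : 0 ≤ α) (hαβ : α < β)
    (S S' φ φ' : ℝ → ℝ)
    (hS : ∀ y ∈ Icc α β, HasDerivAt S (S' y) y)
    (hS'c : ContinuousOn S' (Icc α β))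
    (hSmono : AntitoneOn S (Icc α β))
    (hSpos : ∀ y ∈ Icc α β, 0 < S y ∧ S y ≤ 1)
    (hφ : ∀ y ∈ Icc α β, HasDerivAt φ (φ' y) y)
    (hφ'c : ContinuousOn φ' (Icc α β))
    (L : ℝ → ℝ) (hL : ∀ y, L y = ∫ u in y..β, S u * φ' u) :
    ∀ w y : ℝ, α ≤ w → w ≤ y → y ≤ β →
      ((∫ u in w..y, L u * (-(S' u) / S u) / S u)
          = L y / S y - L w / S w + φ y - φ w)
      ∧ (|∫ u in w..y, L u * (-(S' u) / S u) / S u|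
          ≤ 2 * (⨆ u : Icc w y, |L u.1 / S u.1|) + ∫ u in w..y, |φ' u|)
      ∧ (MonotoneOn φ (Icc α β) →
          0 ≤ (∫ u in w..y, L u * (-(S' u) / S u) / S u)
          ∧ (∫ u in w..y, L u * (-(S' u) / S u) / S u)
              ≤ 2 * (⨆ u : Icc w y, |L u.1 / S u.1|) + (φ y - φ w)) := by
  intro w y hw hwy hy
  have hwIcc : w ∈ Icc α β := ⟨hw, le_trans hwy hy⟩
  have hyIcc : y ∈ Icc α β := ⟨le_trans hw hwy, hy⟩
  have hsub : Icc w y ⊆ Icc α β := Icc_subset_Icc hw hy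
  have hSc : ContinuousOn S (Icc α β) := fun x hx =>
    (hS x hx).continuousAt.continuousWithinAt
  have hφc : ContinuousOn φ (Icc α β) := fun x hx =>
    (hφ x hx).continuousAt.continuousWithinAt
  have hSne : ∀ x ∈ Icc α β, S x ≠ 0 := fun x hx => (hSpos x hx).1.ne'
  set f : ℝ → ℝ := fun u => S u * φ' u with hf
  have hfc : ContinuousOn f (Icc α β) := hSc.mul hφ'c
  have hLfun : L = fun x => ∫ t in x..β, f t := funext hL
  -- continuity of L on Icc α β
  have hLc : ContinuousOn L (Icc α β) := by
    rw [hLfun]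
    have : IntegrableOn f (uIcc α β) := by
      rw [uIcc_of_le hαβ.le]; exact hfc.integrableOn_Icc
    simpa [uIcc_of_le hαβ.le] using continuousOn_primitive_interval_left this
  -- derivative of L at interior points
  have hLd : ∀ x ∈ Ioo α β, HasDerivAt L (-(S x * φ' x)) x := by
    intro x hx
    rw [hLfun]
    have hint : IntervalIntegrable f volume x β := by
      apply ContinuousOn.intervalIntegrable
      rw [uIcc_of_le hx.2.le]
      exact hfc.mono (Icc_subset_Icc hx.1.le le_rfl)
    have hcont : ContinuousAt f x :=
      hfc.continuousAt (Icc_mem_nhds hx.1 hx.2)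
    have hmeas : StronglyMeasurableAtFilter f (nhds x) volume :=
      (hfc.mono Ioo_subset_Icc_self).stronglyMeasurableAtFilter isOpen_Ioo x hx
    exact integral_hasDerivAt_left hint hmeas hcont
  -- the function G and its derivative
  set G : ℝ → ℝ := fun u => L u / S u + φ u with hG
  have hGc : ContinuousOn G (Icc α β) := (hLc.div hSc hSne).add hφc
  have hGd : ∀ x ∈ Ioo α β, HasDerivAt G (L x * (-(S' x) / S x) / S x) x := by
    intro x hx
    have hxI : x ∈ Icc α β := Ioo_subset_Icc_self hx
    have h1 := ((hLd x hx).div (hS x hxI) (hSne x hxI)).add (hφ x hxI)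
    convert h1 using 1
    · rfl
    · rfl
    · rfl
    have hs : S x ≠ 0 := hSne x hxI
    field_simp
    ring
  -- continuity and integrability of the integrand
  have hgc : ContinuousOn (fun u => L u * (-(S' u) / S u) / S u) (Icc α β) :=
    (hLc.mul (hS'c.neg.div hSc hSne)).div hSc hSne
  have hgint : IntervalIntegrable (fun u => L u * (-(S' u) / S u) / S u) volume w y := by
    apply ContinuousOn.intervalIntegrable
    rw [uIcc_of_le hwy]
    exact hgc.mono hsub
  -- the key identity
  have hIoo : Ioo w y ⊆ Ioo α β := Ioo_subset_Ioo hw hy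
  have hkey : (∫ u in w..y, L u * (-(S' u) / S u) / S u) = G y - G w := by
    apply integral_eq_sub_of_hasDeriv_right_of_le hwy (hGc.mono hsub) _ hgint
    intro x hx
    exact ((hGd x (hIoo hx))).hasDerivWithinAt
  have hident : (∫ u in w..y, L u * (-(S' u) / S u) / S u)
      = L y / S y - L w / S w + φ y - φ w := by
    rw [hkey, hG]; ring
  -- the sup bound
  have hneI : (Icc w y).Nonempty := ⟨w, le_rfl, hwy⟩
  haveI : Nonempty (Icc w y) := hneI.to_subtype
  have habs : ContinuousOn (fun u => |L u / S u|) (Icc w y) :=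
    (((hLc.mono hsub).div (hSc.mono hsub) (fun x hx => hSne x (hsub hx)))).abs
  have hbdd : BddAbove (range fun u : Icc w y => |L u.1 / S u.1|) := by
    refine (isCompact_Icc.image_of_continuousOn habs).bddAbove.mono ?_
    rintro _ ⟨⟨u, hu⟩, rfl⟩
    exact ⟨u, hu, rfl⟩
  have hyle : |L y / S y| ≤ ⨆ u : Icc w y, |L u.1 / S u.1| :=
    le_ciSup hbdd (⟨y, hwy, le_rfl⟩ : Icc w y)
  have hwle : |L w / S w| ≤ ⨆ u : Icc w y, |L u.1 / S u.1| :=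
    le_ciSup hbdd (⟨w, le_rfl, hwy⟩ : Icc w y)
  -- FTC for φ
  have hφint : (∫ u in w..y, φ' u) = φ y - φ w := by
    apply integral_eq_sub_of_hasDerivAt
    · intro x hx
      rw [uIcc_of_le hwy] at hx
      exact hφ x (hsub hx)
    · apply ContinuousOn.intervalIntegrable
      rw [uIcc_of_le hwy]
      exact hφ'c.mono hsub
  refine ⟨hident, ?_, ?_⟩
  · -- bound (ii)
    have h1 : |φ y - φ w| ≤ ∫ u in w..y, |φ' u| := by
      rw [← hφint]
      exact intervalIntegral.abs_integral_le_integral_abs hwy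
    rw [hident]
    have h2 : |L y / S y - L w / S w + φ y - φ w|
        ≤ |L y / S y| + |L w / S w| + |φ y - φ w| := by
      have := abs_add_le (L y / S y - L w / S w) (φ y - φ w)
      have h3 := abs_sub (L y / S y) (L w / S w)
      calc |L y / S y - L w / S w + φ y - φ w|
          = |(L y / S y - L w / S w) + (φ y - φ w)| := by ring_nf
        _ ≤ |L y / S y - L w / S w| + |φ y - φ w| := abs_add_le _ _
        _ ≤ |L y / S y| + |L w / S w| + |φ y - φ w| := by linarith
    linarith
  · -- part (iii)
    intro hmon
    have hφ'nn : ∀ x ∈ Icc α β, 0 ≤ φ' x := fun x hx =>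
      deriv_nonneg_of_monotoneOn_aux hαβ hx hmon (hφ x hx)
    have hS'np : ∀ x ∈ Icc α β, S' x ≤ 0 := by
      intro x hx
      have hm : MonotoneOn (fun z => -S z) (Icc α β) := fun a ha b hb hab =>
        neg_le_neg (hSmono ha hb hab)
      have := deriv_nonneg_of_monotoneOn_aux hαβ hx hm (hS x hx).neg
      linarith
    have hLnn : ∀ x ∈ Icc α β, 0 ≤ L x := by
      intro x hx
      rw [hL]
      apply intervalIntegral.integral_nonneg hx.2
      intro t ht
      have htI : t ∈ Icc α β := ⟨le_trans hx.1 ht.1, ht.2⟩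
      exact mul_nonneg (hSpos t htI).1.le (hφ'nn t htI)
    constructor
    · apply intervalIntegral.integral_nonneg hwy
      intro u hu
      have huI : u ∈ Icc α β := hsub hu
      have hs : 0 < S u := (hSpos u huI).1
      apply div_nonneg _ hs.le
      apply mul_nonneg (hLnn u huI)
      apply div_nonneg _ hs.le
      linarith [hS'np u huI]
    · rw [hident]
      have h1 : L y / S y ≤ |L y / S y| := le_abs_self _
      have h2 : -|L w / S w| ≤ L w / S w := neg_abs_le _
      linarith
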